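/- arXiv:1409.5238 — 2 statements merged into one kernel-verified Lean document; each statement's English description precedes it below -/
import Mathlib

section
/- Let s, h, C > 0 and suppose a sequence (c_α)_{α∈ℕ^d} of complex numbers satisfies (2|α|+d)^N |c_α| ≤ C h^N (N!)^{2s} for every integer N ≥ 0 and every α. Then |c_α| ≤ 4^s C e^{-s|α|^{1/(2s)}/h^{1/(2s)}} for every α ∈ ℕ^d. -/
lemma pow_rpow_comm' (x : ℝ) (hx : 0 ≤ x) (r : ℝ) (N : ℕ) :
    (x ^ N) ^ r = (x ^ r) ^ N := by
  rw [← Real.rpow_natCast x N, ← Real.rpow_mul hx, mul_comm, Real.rpow_mul hx,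
    Real.rpow_natCast]

theorem stmt_3 (d : ℕ) (s h C : ℝ) (hs : 0 < s) (hh : 0 < h) (hC : 0 < C)
    (c : (Fin d → ℕ) → ℂ)
    (hcond : ∀ N : ℕ, ∀ α : Fin d → ℕ,
      (2 * (∑ i, (α i : ℝ)) + d) ^ N * ‖c α‖
        ≤ C * h ^ N * (Nat.factorial N : ℝ) ^ (2 * s)) :
    ∀ α : Fin d → ℕ,
      ‖c α‖
        ≤ (4 : ℝ) ^ s * C *
            Real.exp (-(s * (∑ i, (α i : ℝ)) ^ (1 / (2 * s)) / h ^ (1 / (2 * s)))) := by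
  intro α
  set t : ℝ := ∑ i, (α i : ℝ) with ht
  have ht0 : 0 ≤ t := Finset.sum_nonneg fun i _ => Nat.cast_nonneg _
  have hs2 : (0:ℝ) < 2 * s := by linarith
  have hr0 : (0:ℝ) < 1 / (2 * s) := by positivity
  set r : ℝ := 1 / (2 * s) with hrdef
  have hsr : 2 * s * r = 1 := by rw [hrdef]; field_simp
  have h4s : (1:ℝ) ≤ (4:ℝ) ^ s := Real.one_le_rpow (by norm_num) hs.le
  have habs : 0 ≤ ‖c α‖ := norm_nonneg _
  have hbase : ‖c α‖ ≤ C := by simpa using hcond 0 α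
  by_cases hD : 2 * t + d = 0
  · have htz : t = 0 := by
      have : (0:ℝ) ≤ (d:ℝ) := Nat.cast_nonneg _
      linarith
    rw [htz, Real.zero_rpow (ne_of_gt hr0)]
    simp only [mul_zero, zero_div, neg_zero, Real.exp_zero, mul_one]
    calc ‖c α‖ ≤ C := hbase
      _ = 1 * C := (one_mul C).symm
      _ ≤ (4:ℝ) ^ s * C := mul_le_mul_of_nonneg_right h4s hC.le
  · have hD0 : 0 < 2 * t + d := lt_of_le_of_ne (by positivity) (Ne.symm hD)
    set a : ℝ := ‖c α‖ ^ r with hadef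
    set B : ℝ := C ^ r with hBdef
    set X : ℝ := (2 * t + d) ^ r with hXdef
    set Y : ℝ := h ^ r with hYdef
    have hX0 : 0 < X := Real.rpow_pos_of_pos hD0 _
    have hY0 : 0 < Y := Real.rpow_pos_of_pos hh _
    set K : ℝ := X / Y with hKdef
    have hK0 : 0 < K := div_pos hX0 hY0
    have hB0 : 0 < B := Real.rpow_pos_of_pos hC _
    have ha0 : 0 ≤ a := Real.rpow_nonneg habs _
    have key : ∀ N : ℕ, a * K ^ N ≤ B * N.factorial := by
      intro N
      have h2 : (((2 * t + d)) ^ N * ‖c α‖) ^ r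
          ≤ (C * h ^ N * (N.factorial : ℝ) ^ (2 * s)) ^ r :=
        Real.rpow_le_rpow (by positivity) (hcond N α) hr0.le
      rw [Real.mul_rpow (by positivity) habs, pow_rpow_comm' _ hD0.le,
        Real.mul_rpow (by positivity) (by positivity),
        Real.mul_rpow hC.le (by positivity), pow_rpow_comm' _ hh.le,
        ← Real.rpow_mul (Nat.cast_nonneg _), hsr, Real.rpow_one] at h2
      -- h2 : X ^ N * a ≤ B * Y ^ N * N!
      rw [hKdef, div_pow, mul_div_assoc', div_le_iff₀ (pow_pos hY0 N)]
      calc a * X ^ N = X ^ N * a := mul_comm _ _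
        _ ≤ B * Y ^ N * N.factorial := h2
        _ = B * N.factorial * Y ^ N := by ring
    -- term-wise bound for the series
    have step2 : ∀ N : ℕ, a * ((K / 2) ^ N / N.factorial) ≤ B * (1 / 2 : ℝ) ^ N := by
      intro N
      have hf : (0:ℝ) < N.factorial := by exact_mod_cast N.factorial_pos
      rw [mul_div_assoc', div_le_iff₀ hf]
      calc a * (K / 2) ^ N = a * K ^ N * (1 / 2 : ℝ) ^ N := by
            rw [div_pow, one_div, inv_pow]; ring
        _ ≤ B * N.factorial * (1 / 2 : ℝ) ^ N :=
            mul_le_mul_of_nonneg_right (key N) (by positivity)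
        _ = B * (1 / 2 : ℝ) ^ N * N.factorial := by ring
    have hsum1 : Summable (fun N : ℕ => a * ((K / 2) ^ N / N.factorial)) :=
      (Real.summable_pow_div_factorial (K / 2)).mul_left a
    have hsum2 : Summable (fun N : ℕ => B * (1 / 2 : ℝ) ^ N) :=
      (summable_geometric_of_lt_one (by norm_num) (by norm_num)).mul_left B
    have hts := Summable.tsum_le_tsum step2 hsum1 hsum2
    have hexp : ∑' N : ℕ, a * ((K / 2) ^ N / N.factorial) = a * Real.exp (K / 2) := by
      rw [tsum_mul_left, Real.exp_eq_exp_ℝ, NormedSpace.exp_eq_tsum_div]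
    have hgeo : ∑' N : ℕ, B * (1 / 2 : ℝ) ^ N = B * 2 := by
      rw [tsum_mul_left, tsum_geometric_of_lt_one (by norm_num) (by norm_num)]
      norm_num
    rw [hexp, hgeo] at hts
    have ha_le : a ≤ 2 * B * Real.exp (-(K / 2)) := by
      rw [Real.exp_neg, ← div_eq_mul_inv, le_div_iff₀ (Real.exp_pos _)]
      linarith
    -- raise to power 2s
    have hr1 : r * (2 * s) = 1 := by rw [hrdef]; field_simp
    have hcabs : ‖c α‖ = a ^ (2 * s) := by
      rw [hadef, ← Real.rpow_mul habs, hr1, Real.rpow_one]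
    have hfinal : ‖c α‖ ≤ (4:ℝ) ^ s * C * Real.exp (-(s * K)) := by
      rw [hcabs]
      calc a ^ (2 * s) ≤ (2 * B * Real.exp (-(K / 2))) ^ (2 * s) :=
            Real.rpow_le_rpow ha0 ha_le hs2.le
        _ = (4:ℝ) ^ s * C * Real.exp (-(s * K)) := by
            rw [Real.mul_rpow (by positivity) (Real.exp_pos _).le,
              Real.mul_rpow (by norm_num) hB0.le, hBdef,
              ← Real.rpow_mul hC.le, hrdef]
            rw [← Real.exp_mul]
            have h1 : 1 / (2 * s) * (2 * s) = 1 := by field_simp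
            rw [h1, Real.rpow_one]
            have h2 : (2:ℝ) ^ (2 * s) = (4:ℝ) ^ s := by
              rw [Real.rpow_mul (by norm_num : (0:ℝ) ≤ 2)]
              congr 1
              rw [show (2:ℝ) = ((2:ℕ):ℝ) by norm_num, Real.rpow_natCast]
              norm_num
            have h3 : -(K / 2) * (2 * s) = -(s * K) := by ring
            rw [h2, h3]
    refine hfinal.trans ?_
    apply mul_le_mul_of_nonneg_left _ (by positivity)
    apply Real.exp_le_exp.mpr
    have hXt : t ^ r ≤ X := by
      rw [hXdef]
      exact Real.rpow_le_rpow ht0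
        (by linarith [show (0:ℝ) ≤ d from Nat.cast_nonneg d]) hr0.le
    have hmono : s * t ^ r / h ^ r ≤ s * K := by
      rw [hKdef, hYdef, mul_div_assoc]
      gcongr
    exact neg_le_neg hmono
end

section
/- Let C, s, h > 0 and suppose (c_α)_{α∈ℕ^d} satisfies |c_α| ≤ C e^{-|α|^{1/(2s)}/h} for all α. Then there is a constant C_1 > 0 (depending only on C, s, h, d) such that for every integer N ≥ 0, (∑_{α∈ℕ^d} (2|α|+d)^{2N} |c_α|^2)^{1/2} ≤ C_1 (3(4sh)^{2s})^N (N!)^{2s}. -/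
open Real

lemma keyB {q : ℝ} (hq : 0 ≤ q) (N : ℕ) : q ^ N ≤ N.factorial * Real.exp q := by
  have h1 := Real.pow_div_factorial_le_exp q hq N
  rw [div_le_iff₀ (by positivity)] at h1
  linarith

-- x^(2N) ≤ B^N (N!)^{4s} exp(x^{1/(2s)}/h)
lemma key2 (s h : ℝ) (hs : 0 < s) (hh : 0 < h) {x : ℝ} (hx : 0 ≤ x) (N : ℕ) :
    x ^ (2 * N) ≤ ((4 * s * h) ^ ((4:ℝ) * s)) ^ N * (N.factorial : ℝ) ^ ((4:ℝ) * s)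
      * Real.exp (x ^ (1 / (2 * s)) / h) := by
  set t : ℝ := x ^ (1 / (2 * s)) with ht
  have ht0 : 0 ≤ t := Real.rpow_nonneg hx _
  have hsh : (0:ℝ) < 4 * s * h := by positivity
  set q : ℝ := t / (4 * s * h) with hqdef
  have hq0 : 0 ≤ q := by positivity
  have hB : q ^ N ≤ N.factorial * Real.exp q := keyB hq0 N
  have h1 : (q ^ N) ^ ((4:ℝ) * s) ≤ ((N.factorial : ℝ) * Real.exp q) ^ ((4:ℝ) * s) :=
    Real.rpow_le_rpow (by positivity) hB (by positivity)
  have e1 : (q ^ N) ^ ((4:ℝ) * s) = q ^ (((4:ℝ) * s) * N) := by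
    rw [← Real.rpow_natCast q N, ← Real.rpow_mul hq0, mul_comm]
  have e2 : ((N.factorial : ℝ) * Real.exp q) ^ ((4:ℝ) * s)
      = (N.factorial : ℝ) ^ ((4:ℝ) * s) * Real.exp (t / h) := by
    rw [Real.mul_rpow (by positivity) (Real.exp_pos q).le]
    congr 1
    rw [Real.rpow_def_of_pos (Real.exp_pos q), Real.log_exp]
    congr 1
    field_simp [hqdef]
    rw [hqdef]; field_simp
  have e3 : t = (4 * s * h) * q := by rw [hqdef]; field_simp
  have e4 : x ^ (2 * N) = t ^ (((4:ℝ) * s) * N) := by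
    rw [ht, ← Real.rpow_natCast x (2 * N), ← Real.rpow_mul hx]
    congr 1
    push_cast
    field_simp
    ring
  have e5 : t ^ (((4:ℝ) * s) * N) = ((4 * s * h) ^ ((4:ℝ) * s)) ^ N * q ^ (((4:ℝ) * s) * N) := by
    rw [e3, Real.mul_rpow hsh.le hq0]
    congr 1
    rw [← Real.rpow_natCast ((4 * s * h) ^ ((4:ℝ) * s)) N, ← Real.rpow_mul hsh.le]
  calc x ^ (2 * N) = ((4 * s * h) ^ ((4:ℝ) * s)) ^ N * q ^ (((4:ℝ) * s) * N) := by rw [e4, e5]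
    _ ≤ ((4 * s * h) ^ ((4:ℝ) * s)) ^ N * ((N.factorial : ℝ) ^ ((4:ℝ) * s) * Real.exp (t / h)) := by
        refine mul_le_mul_of_nonneg_left ?_ (by positivity)
        rw [← e1, ← e2]; exact h1
    _ = _ := by ring

lemma summable_f0 : Summable (fun n : ℕ => 1 / ((n : ℝ) + 1) ^ 2) := by
  have h0 : Summable (fun n : ℕ => 1 / (n : ℝ) ^ 2) :=
    Real.summable_one_div_nat_pow.mpr one_lt_two
  have h1 := (summable_nat_add_iff (f := fun n : ℕ => 1 / (n : ℝ) ^ 2) 1).mpr h0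
  refine h1.congr fun n => ?_
  push_cast
  ring

lemma summable_pi_prod (d : ℕ) (f : ℕ → ℝ) (hf0 : ∀ n, 0 ≤ f n) (hf : Summable f) :
    Summable (fun α : Fin d → ℕ => ∏ i, f (α i)) := by
  induction d with
  | zero => exact .of_finite
  | succ n ih =>
    have a1 : (0 : ℕ → ℝ) ≤ f := fun k => hf0 k
    have a2 : (0 : (Fin n → ℕ) → ℝ) ≤ fun α : Fin n → ℕ => ∏ i, f (α i) :=
      fun α => Finset.prod_nonneg fun i _ => hf0 _
    have h2 := Summable.mul_of_nonneg (f := f)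
      (g := fun α : Fin n → ℕ => ∏ i, f (α i)) hf ih a1 a2
    have h3 := h2.comp_injective (Fin.consEquiv fun _ : Fin (n+1) => ℕ).symm.injective
    refine h3.congr fun α => ?_
    simp [Fin.consEquiv, Fin.prod_univ_succ, Fin.tail]

lemma summable_g (d : ℕ) (s h : ℝ) (hs : 0 < s) (hh : 0 < h) :
    Summable (fun α : Fin d → ℕ => Real.exp (-((∑ i, (α i : ℝ)) ^ (1 / (2 * s)) / h))) := by
  set K : ℝ := ((4*s*h) ^ ((4:ℝ)*s))^d * (d.factorial : ℝ) ^ ((4:ℝ)*s) with hK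
  have hK0 : 0 ≤ K := by positivity
  set M₂ : ℝ := 2^(2*d) * (1 + K) with hM
  have hsum : Summable (fun α : Fin d → ℕ => M₂ * ∏ i, (1/((α i : ℝ)+1)^2)) :=
    (summable_pi_prod d _ (fun n => by positivity) summable_f0).mul_left M₂
  refine Summable.of_nonneg_of_le (fun α => (Real.exp_pos _).le) (fun α => ?_) hsum
  set x : ℝ := ∑ i, (α i : ℝ) with hxd
  have hx : 0 ≤ x := Finset.sum_nonneg fun i _ => Nat.cast_nonneg _
  set u : ℝ := x ^ (1 / (2 * s)) / h with hu
  have hu0 : 0 ≤ u := by positivity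
  have hP : ∏ i, ((α i : ℝ) + 1) ≤ (1 + x)^d := by
    calc ∏ i, ((α i : ℝ) + 1) ≤ ∏ _i : Fin d, (1 + x) := by
          refine Finset.prod_le_prod (fun i _ => by positivity) (fun i _ => ?_)
          have : (α i : ℝ) ≤ x :=
            Finset.single_le_sum (f := fun j => (α j : ℝ))
              (fun j _ => Nat.cast_nonneg (α j)) (Finset.mem_univ i)
          linarith
      _ = (1+x)^d := by simp
  have hP2 : ∏ i, ((α i : ℝ)+1)^2 ≤ (1+x)^(2*d) := by
    rw [Finset.prod_pow, mul_comm 2 d, pow_mul]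
    exact pow_le_pow_left₀ (Finset.prod_nonneg fun i _ => by positivity) hP 2
  have he : (1:ℝ) ≤ Real.exp u := Real.one_le_exp hu0
  have h1x : (1+x)^(2*d) ≤ M₂ * Real.exp u := by
    have hkey := key2 s h hs hh hx d
    rcases le_total x 1 with hx1 | hx1
    · have h3 : (1+x)^(2*d) ≤ 2^(2*d) := pow_le_pow_left₀ (by positivity) (by linarith) _
      have h4 : (2:ℝ)^(2*d) ≤ M₂ * Real.exp u := by
        have h7 : (1:ℝ) ≤ (1+K) * Real.exp u := by nlinarith
        rw [hM, mul_assoc]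
        exact le_mul_of_one_le_right (by positivity) h7
      linarith
    · have h2 : (1+x) ≤ 2*x := by linarith
      have h3 : (1+x)^(2*d) ≤ (2*x)^(2*d) := pow_le_pow_left₀ (by positivity) h2 _
      have h4 : (2*x)^(2*d) = 2^(2*d) * x^(2*d) := mul_pow 2 x (2*d)
      have h5 : x^(2*d) ≤ K * Real.exp u := hkey
      have h6 : (0:ℝ) < 2^(2*d) := pow_pos (by norm_num) _
      calc (1+x)^(2*d) ≤ 2^(2*d) * x^(2*d) := by rw [← h4]; exact h3
        _ ≤ 2^(2*d) * (K * Real.exp u) := by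
            exact mul_le_mul_of_nonneg_left h5 h6.le
        _ ≤ M₂ * Real.exp u := by
            rw [hM]
            have h8 : (0:ℝ) ≤ Real.exp u := (Real.exp_pos u).le
            nlinarith [h6]
  have hprodpos : (0:ℝ) < ∏ i, ((α i:ℝ)+1)^2 :=
    Finset.prod_pos fun i _ => by positivity
  have hrw : M₂ * ∏ i, (1/((α i : ℝ)+1)^2) = M₂ / ∏ i, ((α i : ℝ)+1)^2 := by
    rw [div_eq_mul_inv, ← Finset.prod_inv_distrib]
    simp [one_div]
  rw [hrw, le_div_iff₀ hprodpos]
  calc Real.exp (-u) * ∏ i, ((α i:ℝ)+1)^2 ≤ Real.exp (-u) * (1+x)^(2*d) :=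
        mul_le_mul_of_nonneg_left hP2 (Real.exp_pos _).le
    _ ≤ Real.exp (-u) * (M₂ * Real.exp u) :=
        mul_le_mul_of_nonneg_left h1x (Real.exp_pos _).le
    _ = M₂ := by rw [Real.exp_neg]; field_simp


theorem stmt_5 (d : ℕ) (C s h : ℝ) (hC : 0 < C) (hs : 0 < s) (hh : 0 < h)
    (c : (Fin d → ℕ) → ℂ)
    (hc : ∀ α : Fin d → ℕ,
      ‖c α‖ ≤ C * Real.exp (-((∑ i, (α i : ℝ)) ^ (1 / (2 * s)) / h))) :
    ∃ C₁ > 0, ∀ N : ℕ,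
      Real.sqrt (∑' α : Fin d → ℕ,
          (2 * (∑ i, (α i : ℝ)) + d) ^ (2 * N) * ‖c α‖ ^ 2)
        ≤ C₁ * (3 * (4 * s * h) ^ (2 * s)) ^ N * (Nat.factorial N : ℝ) ^ (2 * s) := by
  have hB0 : (0:ℝ) < (4*s*h) ^ ((4:ℝ)*s) := Real.rpow_pos_of_pos (by positivity) _
  set B : ℝ := (4*s*h) ^ ((4:ℝ)*s) with hB
  set g : (Fin d → ℕ) → ℝ :=
    fun α => Real.exp (-((∑ i, (α i : ℝ)) ^ (1 / (2 * s)) / h)) with hg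
  have hgsum : Summable g := summable_g d s h hs hh
  set E : ℝ := Real.exp ((d:ℝ) ^ (1 / (2 * s)) / h) with hE
  have hE1 : (1:ℝ) ≤ E := Real.one_le_exp (by positivity)
  set S : ℝ := ∑' α, g α with hS
  have hS0 : 0 ≤ S := tsum_nonneg fun α => (Real.exp_pos _).le
  set C₁₀ : ℝ := Real.sqrt (C^2 * (1+E) * S) with hC10
  have hC100 : 0 ≤ C₁₀ := Real.sqrt_nonneg _
  refine ⟨max 1 C₁₀, lt_of_lt_of_le one_pos (le_max_left _ _), fun N => ?_⟩
  set W : ℝ := (N.factorial : ℝ) ^ ((4:ℝ)*s) with hW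
  have hW0 : 0 < W := Real.rpow_pos_of_pos (by exact_mod_cast N.factorial_pos) _
  set K : ℝ := C^2 * (1+E) * (9^N * B^N * W) with hKdef
  -- pointwise bound
  have hpt : ∀ α : Fin d → ℕ,
      (2 * (∑ i, (α i : ℝ)) + d) ^ (2 * N) * ‖c α‖ ^ 2 ≤ K * g α := by
    intro α
    set x : ℝ := ∑ i, (α i : ℝ) with hx
    have hx0 : 0 ≤ x := Finset.sum_nonneg fun i _ => Nat.cast_nonneg _
    set u : ℝ := x ^ (1 / (2 * s)) / h with hu
    have hu0 : 0 ≤ u := by positivity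
    have ha : ‖c α‖ ^ 2 ≤ C^2 * Real.exp (-u) ^ 2 := by
      have h0 := hc α
      calc ‖c α‖ ^ 2 ≤ (C * Real.exp (-u)) ^ 2 :=
            pow_le_pow_left₀ (norm_nonneg _) h0 2
        _ = C^2 * Real.exp (-u) ^ 2 := by ring
    have hb : (2 * x + d) ^ (2 * N) ≤ 9^N * (x ^ (2*N) + (d:ℝ) ^ (2*N)) := by
      have hmax : 2 * x + d ≤ 3 * max x d := by
        rcases le_total x (d:ℝ) with h1 | h1
        · rw [max_eq_right h1]; linarith
        · rw [max_eq_left h1]; linarith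
      have h2 : (2 * x + d) ^ (2*N) ≤ (3 * max x d) ^ (2*N) :=
        pow_le_pow_left₀ (by positivity) hmax _
      have h3 : (3 * max x d) ^ (2*N) = 9^N * (max x d) ^ (2*N) := by
        rw [mul_pow, pow_mul]; norm_num
      have h4 : (max x d) ^ (2*N) ≤ x ^ (2*N) + (d:ℝ) ^ (2*N) := by
        rcases le_total x (d:ℝ) with h1 | h1
        · rw [max_eq_right h1]; nlinarith [pow_nonneg hx0 (2*N)]
        · rw [max_eq_left h1]; nlinarith [pow_nonneg (Nat.cast_nonneg d : (0:ℝ) ≤ d) (2*N)]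
      calc (2 * x + d) ^ (2*N) ≤ (3 * max x d) ^ (2*N) := h2
        _ = 9^N * (max x d) ^ (2*N) := h3
        _ ≤ 9^N * (x ^ (2*N) + (d:ℝ) ^ (2*N)) :=
            mul_le_mul_of_nonneg_left h4 (by positivity)
    have hc1 : x ^ (2*N) ≤ B^N * W * Real.exp u := key2 s h hs hh hx0 N
    have hc2 : (d:ℝ) ^ (2*N) ≤ B^N * W * E :=
      key2 s h hs hh (Nat.cast_nonneg d) N
    have e1 : Real.exp u * Real.exp (-u) ^ 2 = Real.exp (-u) := by
      rw [sq, ← mul_assoc, ← Real.exp_add]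
      simp
    have e2 : Real.exp (-u) ^ 2 ≤ Real.exp (-u) := by
      have h5 : Real.exp (-u) ≤ 1 := Real.exp_le_one_iff.mpr (by linarith)
      nlinarith [Real.exp_pos (-u)]
    have hgα : g α = Real.exp (-u) := rfl
    calc (2 * x + d) ^ (2 * N) * ‖c α‖ ^ 2
        ≤ (9^N * (x ^ (2*N) + (d:ℝ) ^ (2*N))) * (C^2 * Real.exp (-u) ^ 2) :=
          mul_le_mul hb ha (by positivity) (by positivity)
      _ ≤ (9^N * (B^N * W * Real.exp u + B^N * W * E)) * (C^2 * Real.exp (-u) ^ 2) := by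
          refine mul_le_mul_of_nonneg_right ?_ (by positivity)
          exact mul_le_mul_of_nonneg_left (add_le_add hc1 hc2) (by positivity)
      _ = C^2 * 9^N * B^N * W * (Real.exp u * Real.exp (-u) ^ 2)
            + C^2 * 9^N * B^N * W * E * (Real.exp (-u) ^ 2) := by ring
      _ ≤ C^2 * 9^N * B^N * W * Real.exp (-u)
            + C^2 * 9^N * B^N * W * E * Real.exp (-u) := by
          refine add_le_add (le_of_eq (by rw [e1])) ?_
          exact mul_le_mul_of_nonneg_left e2 (by positivity)
      _ = K * g α := by rw [hgα, hKdef]; ring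
  have hFnonneg : ∀ α : Fin d → ℕ,
      0 ≤ (2 * (∑ i, (α i : ℝ)) + d) ^ (2 * N) * ‖c α‖ ^ 2 := by
    intro α
    have hx0 : (0:ℝ) ≤ ∑ i, (α i : ℝ) := Finset.sum_nonneg fun i _ => Nat.cast_nonneg _
    positivity
  have hKg : Summable (fun α => K * g α) := hgsum.mul_left K
  have hFsum : Summable (fun α : Fin d → ℕ =>
      (2 * (∑ i, (α i : ℝ)) + d) ^ (2 * N) * ‖c α‖ ^ 2) :=
    Summable.of_nonneg_of_le hFnonneg hpt hKg
  have hts : (∑' α : Fin d → ℕ,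
      (2 * (∑ i, (α i : ℝ)) + d) ^ (2 * N) * ‖c α‖ ^ 2) ≤ K * S := by
    calc (∑' α : Fin d → ℕ,
        (2 * (∑ i, (α i : ℝ)) + d) ^ (2 * N) * ‖c α‖ ^ 2)
        ≤ ∑' α, K * g α := Summable.tsum_le_tsum hpt hFsum hKg
      _ = K * S := tsum_mul_left
  -- identify K * S with the square of the RHS building block
  set R : ℝ := C₁₀ * (3 * (4*s*h) ^ (2*s)) ^ N * (N.factorial : ℝ) ^ (2*s) with hR
  have hy0 : (0:ℝ) < (4*s*h) ^ (2*s) := Real.rpow_pos_of_pos (by positivity) _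
  have hR0 : 0 ≤ R := by positivity
  have p1 : C₁₀^2 = C^2*(1+E)*S := Real.sq_sqrt (by positivity)
  have py : ((4*s*h) ^ (2*s)) ^ 2 = B := by
    rw [sq, ← Real.rpow_add (by positivity : (0:ℝ) < 4*s*h), hB]
    congr 1
    ring
  have p2 : ((3*(4*s*h) ^ (2*s))^N)^2 = 9^N * B^N := by
    rw [← pow_mul, mul_comm N 2, pow_mul, mul_pow, py, ← mul_pow]
    norm_num
  have p3 : ((N.factorial : ℝ) ^ (2*s))^2 = W := by
    rw [sq, ← Real.rpow_add (by exact_mod_cast N.factorial_pos : (0:ℝ) < (N.factorial:ℝ)), hW]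
    congr 1
    ring
  have hRsq : R^2 = (C^2*(1+E)*S) * (9^N*B^N) * W := by
    rw [hR, mul_pow, mul_pow, p1, p2, p3]
    try ring
  have hts' : (∑' α : Fin d → ℕ,
      (2 * (∑ i, (α i : ℝ)) + d) ^ (2 * N) * ‖c α‖ ^ 2) ≤ R^2 := by
    refine hts.trans (le_of_eq ?_)
    rw [hRsq, hKdef]
    ring
  calc Real.sqrt (∑' α : Fin d → ℕ,
        (2 * (∑ i, (α i : ℝ)) + d) ^ (2 * N) * ‖c α‖ ^ 2)
      ≤ Real.sqrt (R^2) := Real.sqrt_le_sqrt hts'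
    _ = R := Real.sqrt_sq hR0
    _ ≤ max 1 C₁₀ * (3 * (4*s*h) ^ (2*s)) ^ N * (N.factorial : ℝ) ^ (2*s) := by
        rw [hR]
        have h9 : (0:ℝ) ≤ (3 * (4*s*h) ^ (2*s)) ^ N := by positivity
        have h10 : (0:ℝ) ≤ (N.factorial : ℝ) ^ (2*s) := Real.rpow_nonneg (Nat.cast_nonneg _) _
        exact mul_le_mul_of_nonneg_right
          (mul_le_mul_of_nonneg_right (le_max_right 1 C₁₀) h9) h10
end
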